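/- Assume: for every θ ∈ Θ, the gradient ∇_h f_h(θ) exists and is continuous in h on H; the functions θ ↦ sup_{h∈H} f_h(θ) and θ ↦ sup_{h∈H} |g(θ) f_h(θ)| are measurable with ∫ sup_{h∈H} f_h dP < ∞ and ∫ sup_{h∈H} |g f_h| dP < ∞; and ∫ f_h dP > 0 for every h ∈ H. Then, almost surely, for all sufficiently large n the denominator ∑_{i=1}^n f_h(θ_i) is strictly positive for every h ∈ H, and sup_{h∈H} |Î_n(h) − I(h)| → 0 as n → ∞. -/

import Mathlib

open MeasureTheory ProbabilityTheory Filter Topology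

lemma iSup_eq_iSup_dense {K : Type*} [MetricSpace K] [CompactSpace K] [Nonempty K]
    {φ : K → ℝ} (hφ : Continuous φ) {D : ℕ → K} (hD : DenseRange D) :
    ⨆ x, φ x = ⨆ n, φ (D n) := by
  have hbdd : BddAbove (Set.range φ) := (isCompact_range hφ).bddAbove
  have hbdd2 : BddAbove (Set.range fun n => φ (D n)) :=
    hbdd.mono (Set.range_comp_subset_range D φ)
  apply le_antisymm
  · apply ciSup_le; intro x
    obtain ⟨y, hy, hlim⟩ := mem_closure_iff_seq_limit.mp (hD x)
    have hten : Tendsto (fun n => φ (y n)) atTop (𝓝 (φ x)) := (hφ.tendsto x).comp hlim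
    refine le_of_tendsto hten (Eventually.of_forall fun n => ?_)
    obtain ⟨m, hm⟩ := hy n
    rw [← hm]
    exact le_ciSup hbdd2 m
  · exact ciSup_le fun n => le_ciSup hbdd (D n)

lemma measurable_continuousMap_of_eval {α K : Type*} [MeasurableSpace α] [MetricSpace K]
    [CompactSpace K] [SecondCountableTopology K]
    [MeasurableSpace C(K,ℝ)] [BorelSpace C(K,ℝ)] {F : α → C(K, ℝ)}
    (hF : ∀ x : K, Measurable fun a => F a x) : Measurable F := by
  cases isEmpty_or_nonempty K with
  | inl h =>
    have : Subsingleton C(K, ℝ) := ⟨fun a b => by ext x; exact h.elim x⟩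
    exact measurable_of_subsingleton_codomain F
  | inr h =>
    have hdist : ∀ c : C(K, ℝ), Measurable fun a => dist (F a) c := by
      intro c
      have key : ∀ a, dist (F a) c =
          ⨆ n, dist (F a (TopologicalSpace.denseSeq K n)) (c (TopologicalSpace.denseSeq K n)) := by
        intro a
        have h1 : dist (F a) c = ⨆ x, dist (F a x) (c x) := by
          rw [dist_eq_norm, ContinuousMap.norm_eq_iSup_norm]
          simp [dist_eq_norm]
        rw [h1]
        exact iSup_eq_iSup_dense ((F a).continuous.dist c.continuous)
          (TopologicalSpace.denseRange_denseSeq K)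
      simp_rw [key]
      exact Measurable.iSup fun n => (hF _).dist measurable_const
    apply measurable_of_isOpen
    intro U hU
    have hr : ∀ u : U, ∃ r : ℝ, 0 < r ∧ Metric.ball (u : C(K,ℝ)) r ⊆ U := by
      intro u
      obtain ⟨r, hr0, hrU⟩ := Metric.isOpen_iff.mp hU u u.2
      exact ⟨r, hr0, hrU⟩
    choose r hr0 hball using hr
    have hUeq : U = ⋃ u : U, Metric.ball (u : C(K,ℝ)) (r u) := by
      apply Set.Subset.antisymm
      · intro x hx
        exact Set.mem_iUnion.mpr ⟨⟨x, hx⟩, Metric.mem_ball_self (hr0 ⟨x, hx⟩)⟩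
      · exact Set.iUnion_subset fun u => hball u
    obtain ⟨T, hTc, hTU⟩ := TopologicalSpace.isOpen_iUnion_countable
      (fun u : U => Metric.ball (u : C(K,ℝ)) (r u)) (fun u => Metric.isOpen_ball)
    have : F ⁻¹' U = ⋃ u ∈ T, F ⁻¹' (Metric.ball (u : C(K,ℝ)) (r u)) := by
      rw [← Set.preimage_iUnion₂, hTU, ← hUeq]
    rw [this]
    refine MeasurableSet.biUnion hTc fun u _ => ?_
    have : F ⁻¹' (Metric.ball (u : C(K,ℝ)) (r u)) = {a | dist (F a) (u : C(K,ℝ)) < r u} := by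
      ext a; simp [Metric.mem_ball]
    rw [this]
    exact measurableSet_lt (hdist _) measurable_const

/-- uniform consistency of the weighted-average estimator of posterior
expectations, iid case.  Under gradient-continuity of `f`, integrability of
`sup_h f_h` and `sup_h |g f_h|`, and positivity of `∫ f_h dP` for all `h ∈ H`:  almost surely,
eventually in `n` the denominator `∑_{i≤n} f_h(θ_i)` is positive for every `h ∈ H`, and
`sup_{h ∈ H} |Îₙ(h) − I(h)| → 0`. -/
theorem stmt9 {d k : ℕ}
    (Θ : Set (EuclideanSpace ℝ (Fin d))) (hΘ : MeasurableSet Θ)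
    (P : Measure Θ) [IsProbabilityMeasure P]
    (H : Set (EuclideanSpace ℝ (Fin k))) (hH : IsCompact H)
    (f : EuclideanSpace ℝ (Fin k) → Θ → ℝ)
    (hf_meas : ∀ h ∈ H, Measurable (f h))
    (hf_nonneg : ∀ h θ, 0 ≤ f h θ)
    (g : Θ → ℝ) (hg_meas : Measurable g)
    (hgrad : ∀ θ, (∀ h ∈ H, DifferentiableAt ℝ (fun h' => f h' θ) h) ∧
      ContinuousOn (fun h => gradient (fun h' => f h' θ) h) H)
    (hsupf_meas : Measurable (fun θ => ⨆ h : H, f (h : EuclideanSpace ℝ (Fin k)) θ))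
    (hsupf_int : Integrable (fun θ => ⨆ h : H, f (h : EuclideanSpace ℝ (Fin k)) θ) P)
    (hsupgf_meas : Measurable (fun θ => ⨆ h : H, |g θ * f (h : EuclideanSpace ℝ (Fin k)) θ|))
    (hsupgf_int : Integrable (fun θ => ⨆ h : H, |g θ * f (h : EuclideanSpace ℝ (Fin k)) θ|) P)
    (hpos : ∀ h ∈ H, 0 < ∫ θ, f h θ ∂P)
    {Ω : Type*} [MeasurableSpace Ω] (μ : Measure Ω) [IsProbabilityMeasure μ]
    (X : ℕ → Ω → Θ) (hX_meas : ∀ i, Measurable (X i))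
    (hX_indep : iIndepFun X μ)
    (hX_law : ∀ i, Measure.map (X i) μ = P) :
    ∀ᵐ ω ∂μ,
      (∀ᶠ n : ℕ in atTop, ∀ h ∈ H, 0 < ∑ i ∈ Finset.range n, f h (X i ω)) ∧
      Tendsto (fun n : ℕ =>
          ⨆ h : H, |(∑ i ∈ Finset.range n, g (X i ω) * f (h : EuclideanSpace ℝ (Fin k)) (X i ω))
              / (∑ i ∈ Finset.range n, f (h : EuclideanSpace ℝ (Fin k)) (X i ω))
            - (∫ θ, g θ * f (h : EuclideanSpace ℝ (Fin k)) θ ∂P)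
              / (∫ θ, f (h : EuclideanSpace ℝ (Fin k)) θ ∂P)|)
        atTop (𝓝 0) := by
  classical
  rcases Set.eq_empty_or_nonempty H with hHe | hHne
  · subst hHe
    refine ae_of_all _ fun ω => ⟨Eventually.of_forall fun n h hh => absurd hh (Set.notMem_empty h), ?_⟩
    haveI : IsEmpty (↥(∅ : Set (EuclideanSpace ℝ (Fin k)))) := by
      simp only [Set.isEmpty_coe_sort]
    simpa [Real.iSup_of_isEmpty] using (tendsto_const_nhds :
      Tendsto (fun _ : ℕ => (0:ℝ)) atTop (𝓝 0))
  haveI : Nonempty ↥H := hHne.to_subtype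
  haveI : CompactSpace ↥H := isCompact_iff_compactSpace.mp hH
  letI : MeasurableSpace C(↥H, ℝ) := borel _
  haveI : BorelSpace C(↥H, ℝ) := ⟨rfl⟩
  have hcontF : ∀ θ, Continuous fun h : ↥H => f ↑h θ := fun θ =>
    continuousOn_iff_continuous_restrict.mp
      (fun h hh => ((hgrad θ).1 h hh).continuousAt.continuousWithinAt)
  set F : Θ → C(↥H, ℝ) := fun θ => ⟨fun h => f ↑h θ, hcontF θ⟩ with hFdef
  set G : Θ → C(↥H, ℝ) := fun θ => g θ • F θ with hGdef
  have hGapp : ∀ θ (h : ↥H), G θ h = g θ * f ↑h θ := fun θ h => rfl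
  have hFmeas : Measurable F :=
    measurable_continuousMap_of_eval (fun x => hf_meas ↑x x.2)
  have hGmeas : Measurable G :=
    measurable_continuousMap_of_eval (fun x => hg_meas.mul (hf_meas ↑x x.2))
  have hFsm : StronglyMeasurable F := hFmeas.stronglyMeasurable
  have hGsm : StronglyMeasurable G := hGmeas.stronglyMeasurable
  have hnormF : ∀ θ, ‖F θ‖ = ⨆ h : H, f ↑h θ := by
    intro θ
    rw [ContinuousMap.norm_eq_iSup_norm]
    congr 1; funext h
    exact (Real.norm_eq_abs _).trans (abs_of_nonneg (hf_nonneg ↑h θ))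
  have hnormG : ∀ θ, ‖G θ‖ = ⨆ h : H, |g θ * f ↑h θ| := by
    intro θ
    rw [ContinuousMap.norm_eq_iSup_norm]
    rfl
  have hFint : Integrable F P :=
    Integrable.mono' hsupf_int hFsm.aestronglyMeasurable
      (ae_of_all _ fun θ => (hnormF θ).le)
  have hGint : Integrable G P :=
    Integrable.mono' hsupgf_int hGsm.aestronglyMeasurable
      (ae_of_all _ fun θ => (hnormG θ).le)
  set a : C(↥H, ℝ) := ∫ θ, F θ ∂P with hadef
  set b : C(↥H, ℝ) := ∫ θ, G θ ∂P with hbdef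
  have haApp : ∀ h : ↥H, a h = ∫ θ, f ↑h θ ∂P := fun h => by
    rw [hadef, ContinuousMap.integral_apply hFint]; rfl
  have hbApp : ∀ h : ↥H, b h = ∫ θ, g θ * f ↑h θ ∂P := fun h => by
    rw [hbdef, ContinuousMap.integral_apply hGint]; rfl
  obtain ⟨h₀, -, hmin⟩ := isCompact_univ.exists_isMinOn Set.univ_nonempty
    (a.continuous.continuousOn)
  set ε : ℝ := a h₀ with hεdef
  have hεpos : 0 < ε := by rw [hεdef, haApp]; exact hpos ↑h₀ h₀.2
  have hεle : ∀ h : ↥H, ε ≤ a h := fun h => hmin (Set.mem_univ h)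
  set M : ℝ := ‖b‖ with hMdef
  have hM : ∀ h : ↥H, |b h| ≤ M := fun h => by
    simpa [Real.norm_eq_abs] using b.norm_coe_le_norm h
  have hMP : MeasurePreserving (X 0) μ P := ⟨hX_meas 0, hX_law 0⟩
  have hident : ∀ i, IdentDistrib (X i) (X 0) μ μ := fun i =>
    ⟨(hX_meas i).aemeasurable, (hX_meas 0).aemeasurable, by rw [hX_law i, hX_law 0]⟩
  have hindep : Pairwise (Function.onFun (IndepFun · · μ) X) := fun i j hij => hX_indep.indepFun hij
  have hYint : Integrable (F ∘ X 0) μ :=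
    (hMP.integrable_comp hFsm.aestronglyMeasurable).mpr hFint
  have hZint : Integrable (G ∘ X 0) μ :=
    (hMP.integrable_comp hGsm.aestronglyMeasurable).mpr hGint
  have hEa : ∫ ω, (F ∘ X 0) ω ∂μ = a := by
    rw [hadef, ← hX_law 0, integral_map (hX_meas 0).aemeasurable]
    · rfl
    · rw [hX_law 0]; exact hFsm.aestronglyMeasurable
  have hEb : ∫ ω, (G ∘ X 0) ω ∂μ = b := by
    rw [hbdef, ← hX_law 0, integral_map (hX_meas 0).aemeasurable]
    · rfl
    · rw [hX_law 0]; exact hGsm.aestronglyMeasurable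
  have SL1 := strong_law_ae (μ := μ) (fun i => F ∘ X i) hYint
    (fun i j hij => (hindep hij).comp hFmeas hFmeas)
    (fun i => (hident i).comp hFmeas)
  have SL2 := strong_law_ae (μ := μ) (fun i => G ∘ X i) hZint
    (fun i j hij => (hindep hij).comp hGmeas hGmeas)
    (fun i => (hident i).comp hGmeas)
  rw [hEa] at SL1
  rw [hEb] at SL2
  filter_upwards [SL1, SL2] with ω hA hB
  set AN : ℕ → C(↥H, ℝ) := fun n => (n : ℝ)⁻¹ • ∑ i ∈ Finset.range n, F (X i ω) with hANdef
  set BN : ℕ → C(↥H, ℝ) := fun n => (n : ℝ)⁻¹ • ∑ i ∈ Finset.range n, G (X i ω) with hBNdef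
  have hANapp : ∀ n (h : ↥H), AN n h = (n : ℝ)⁻¹ * ∑ i ∈ Finset.range n, f ↑h (X i ω) := by
    intro n h
    simp only [hANdef, ContinuousMap.smul_apply, smul_eq_mul]
    congr 1
    rw [ContinuousMap.coe_sum, Finset.sum_apply]
    rfl
  have hBNapp : ∀ n (h : ↥H),
      BN n h = (n : ℝ)⁻¹ * ∑ i ∈ Finset.range n, g (X i ω) * f ↑h (X i ω) := by
    intro n h
    simp only [hBNdef, ContinuousMap.smul_apply, smul_eq_mul]
    congr 1
    rw [ContinuousMap.coe_sum, Finset.sum_apply]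
    rfl
  have hA' : Tendsto (fun n => ‖AN n - a‖) atTop (𝓝 0) :=
    tendsto_iff_norm_sub_tendsto_zero.mp hA
  have hB' : Tendsto (fun n => ‖BN n - b‖) atTop (𝓝 0) :=
    tendsto_iff_norm_sub_tendsto_zero.mp hB
  have hptA : ∀ n (h : ↥H), |AN n h - a h| ≤ ‖AN n - a‖ := fun n h => by
    simpa [Real.norm_eq_abs, ContinuousMap.sub_apply] using (AN n - a).norm_coe_le_norm h
  have hptB : ∀ n (h : ↥H), |BN n h - b h| ≤ ‖BN n - b‖ := fun n h => by
    simpa [Real.norm_eq_abs, ContinuousMap.sub_apply] using (BN n - b).norm_coe_le_norm h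
  have hev : ∀ᶠ n in atTop, ‖AN n - a‖ ≤ ε / 2 :=
    hA'.eventually_le_const (by positivity)
  constructor
  · filter_upwards [hev, eventually_ge_atTop 1] with n hn hn1
    intro h hh
    have hnpos : (0 : ℝ) < n := by exact_mod_cast hn1
    have h1 : |AN n ⟨h, hh⟩ - a ⟨h, hh⟩| ≤ ε / 2 := le_trans (hptA n ⟨h, hh⟩) hn
    have h2 : ε ≤ a ⟨h, hh⟩ := hεle ⟨h, hh⟩
    have h3 : 0 < AN n ⟨h, hh⟩ := by
      have := abs_le.mp h1
      linarith [this.1]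
    have h4 : (∑ i ∈ Finset.range n, f h (X i ω)) = (n : ℝ) * AN n ⟨h, hh⟩ := by
      rw [hANapp]; field_simp
    rw [h4]
    positivity
  · have hRlim : Tendsto
        (fun n => (2 / ε) * ‖BN n - b‖ + (2 * M / ε ^ 2) * ‖AN n - a‖) atTop (𝓝 0) := by
      simpa using ((hB'.const_mul (2 / ε)).add (hA'.const_mul (2 * M / ε ^ 2)))
    refine squeeze_zero' (Eventually.of_forall fun n => Real.iSup_nonneg fun h => abs_nonneg _)
      ?_ hRlim
    filter_upwards [hev, eventually_ge_atTop 1] with n hn hn1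
    refine ciSup_le fun h => ?_
    have hnpos : (0 : ℝ) < n := by exact_mod_cast hn1
    set A' : ℝ := AN n h with hA'def
    set B' : ℝ := BN n h with hB'def
    have hptAh : |A' - a h| ≤ ε / 2 := le_trans (hptA n h) hn
    have hA'ge : ε / 2 ≤ A' := by
      have h2 := hεle h
      have := abs_le.mp hptAh
      linarith [this.1]
    have hA'pos : 0 < A' := lt_of_lt_of_le (by positivity) hA'ge
    have haPos : 0 < a h := lt_of_lt_of_le hεpos (hεle h)
    have hSf : (∑ i ∈ Finset.range n, f ↑h (X i ω)) = (n : ℝ) * A' := by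
      rw [hA'def, hANapp]; field_simp
    have hSg : (∑ i ∈ Finset.range n, g (X i ω) * f ↑h (X i ω)) = (n : ℝ) * B' := by
      rw [hB'def, hBNapp]; field_simp
    rw [hSf, hSg, mul_div_mul_left _ _ hnpos.ne', ← haApp, ← hbApp]
    have hrw : B' / A' - b h / a h =
        (B' - b h) / A' + (b h) * (a h - A') / (A' * a h) := by
      field_simp
      ring
    rw [hrw]
    have t1 : |(B' - b h) / A'| ≤ ‖BN n - b‖ / (ε / 2) := by
      rw [abs_div, abs_of_pos hA'pos]
      exact div_le_div₀ (norm_nonneg _) (hptB n h) (by positivity) hA'ge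
    have t2 : |b h * (a h - A') / (A' * a h)| ≤ M * ‖AN n - a‖ / ((ε / 2) * ε) := by
      rw [abs_div, abs_of_pos (mul_pos hA'pos haPos), abs_mul]
      refine div_le_div₀ (by positivity) ?_ (by positivity) ?_
      · refine mul_le_mul (hM h) ?_ (abs_nonneg _) (norm_nonneg _)
        rw [abs_sub_comm]
        exact hptA n h
      · exact mul_le_mul hA'ge (hεle h) hεpos.le hA'pos.le
    calc |(B' - b h) / A' + b h * (a h - A') / (A' * a h)|
        ≤ |(B' - b h) / A'| + |b h * (a h - A') / (A' * a h)| := abs_add_le _ _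
      _ ≤ ‖BN n - b‖ / (ε / 2) + M * ‖AN n - a‖ / ((ε / 2) * ε) := add_le_add t1 t2
      _ = (2 / ε) * ‖BN n - b‖ + (2 * M / ε ^ 2) * ‖AN n - a‖ := by
          field_simp
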